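/- arXiv:1401.1341 — 2 statements merged into one kernel-verified Lean document; each statement's English description precedes it below -/
import Mathlib

section
/- If g : (0, R₀] → [0,∞) is nondecreasing and satisfies g(R) ≤ θ · g(2R) + K · R^γ for all 2R ≤ R₀, with 0 < θ < 1, K ≥ 0, γ > 0, then there exist α ∈ (0, γ/2) with 2^{−2α} ≥ θ and a constant M (depending only on θ, γ, K, R₀, g(R₀)) such that g(R) ≤ M · R^{2α} for all R ≤ R₀/2. -/
/-- Abstract form of Widman's hole-filling iteration: a nondecreasing nonnegative `g`
satisfying `g R ≤ θ g(2R) + K R^γ` with `0 < θ < 1` has Morrey-type power decay. -/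
theorem hole_filling_power_decay
    (g : ℝ → ℝ) (R₀ θ K γ : ℝ)
    (hR₀ : 0 < R₀) (hθ0 : 0 < θ) (hθ1 : θ < 1) (hK : 0 ≤ K) (hγ : 0 < γ)
    (hnonneg : ∀ r, 0 < r → r ≤ R₀ → 0 ≤ g r)
    (hmono : ∀ r s, 0 < r → r ≤ s → s ≤ R₀ → g r ≤ g s)
    (hole : ∀ R, 0 < R → 2 * R ≤ R₀ → g R ≤ θ * g (2 * R) + K * R ^ γ) :
    ∃ α, 0 < α ∧ α < γ / 2 ∧ θ ≤ (2 : ℝ) ^ (-(2 * α)) ∧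
      ∃ M, ∀ R, 0 < R → R ≤ R₀ / 2 → g R ≤ M * R ^ (2 * α) := by
  have hθinv : (1 : ℝ) < θ⁻¹ := (one_lt_inv₀ hθ0).mpr hθ1
  have hlog : 0 < Real.logb 2 θ⁻¹ := Real.logb_pos one_lt_two hθinv
  set β : ℝ := min γ (Real.logb 2 θ⁻¹) / 2 with hβdef
  have hβpos : 0 < β := by positivity
  have hβγ : β < γ := by
    have : min γ (Real.logb 2 θ⁻¹) ≤ γ := min_le_left _ _
    nlinarith
  have hβlog : β < Real.logb 2 θ⁻¹ := by
    have : min γ (Real.logb 2 θ⁻¹) ≤ Real.logb 2 θ⁻¹ := min_le_right _ _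
    nlinarith
  -- θ < 2^(-β)
  have hθlt : θ < (2 : ℝ) ^ (-β) := by
    have h1 : θ⁻¹ = (2 : ℝ) ^ (Real.logb 2 θ⁻¹) :=
      (Real.rpow_logb two_pos (by norm_num) (by positivity)).symm
    have h2 : (2 : ℝ) ^ β < (2 : ℝ) ^ (Real.logb 2 θ⁻¹) :=
      Real.rpow_lt_rpow_left_iff one_lt_two |>.mpr hβlog
    have h3 : (2 : ℝ) ^ β < θ⁻¹ := by rw [h1]; exact h2
    have h4 : θ * (2 : ℝ) ^ β < 1 := by
      have := mul_lt_mul_of_pos_left h3 hθ0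
      simpa [mul_inv_cancel₀ (ne_of_gt hθ0)] using this
    have h5 : (0:ℝ) < (2:ℝ) ^ β := Real.rpow_pos_of_pos two_pos β
    rw [Real.rpow_neg (by norm_num), lt_inv_comm₀ hθ0 h5]
    -- goal: 2^β < θ⁻¹? check
    exact h3
  have hb : θ * (2 : ℝ) ^ β < 1 := by
    have h5 : (0:ℝ) < (2:ℝ) ^ β := Real.rpow_pos_of_pos two_pos β
    have := mul_lt_mul_of_pos_right hθlt h5
    rw [← Real.rpow_add two_pos, neg_add_cancel, Real.rpow_zero] at this
    simpa using this
  set b : ℝ := θ * (2 : ℝ) ^ β with hbdef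
  have hbpos : 0 < b := by positivity
  have hb1 : 1 - b > 0 := by linarith
  set M : ℝ := max (g R₀ / (R₀/4) ^ β) (K * R₀ ^ (γ - β) / (1 - b)) with hM
  have hgR₀ : 0 ≤ g R₀ := hnonneg R₀ hR₀ le_rfl
  have hMnonneg : 0 ≤ M := le_trans (by positivity) (le_max_left _ _)
  refine ⟨β / 2, by positivity, by nlinarith, ?_, M, ?_⟩
  · have : -(2 * (β/2)) = -β := by ring
    rw [this]; exact le_of_lt hθlt
  have h2β : 2 * (β/2) = β := by ring
  rw [h2β]  -- goal uses R ^ β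
  -- key induction
  have key : ∀ n : ℕ, ∀ R : ℝ, R₀ / 2 ^ (n + 2) < R → R ≤ R₀ / 2 → 0 < R → g R ≤ M * R ^ β := by
    intro n
    induction n with
    | zero =>
      intro R hlo hhi hRpos
      have hRle : R ≤ R₀ := hhi.trans (by linarith)
      have h1 : g R ≤ g R₀ := hmono R R₀ hRpos hRle le_rfl
      have h2 : g R₀ ≤ M * (R₀/4) ^ β := by
        have hp : (0:ℝ) < (R₀/4) ^ β := Real.rpow_pos_of_pos (by linarith) β
        have := le_max_left (g R₀ / (R₀/4) ^ β) (K * R₀ ^ (γ - β) / (1 - b))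
        calc g R₀ = g R₀ / (R₀/4) ^ β * (R₀/4) ^ β := by field_simp
          _ ≤ M * (R₀/4) ^ β := by exact mul_le_mul_of_nonneg_right this (le_of_lt hp)
      have h3 : (R₀/4) ^ β ≤ R ^ β := by
        apply Real.rpow_le_rpow (by linarith) _ (le_of_lt hβpos)
        have : R₀ / 2 ^ (0 + 2) = R₀ / 4 := by norm_num
        linarith [this ▸ hlo]
      calc g R ≤ M * (R₀/4) ^ β := h1.trans h2
        _ ≤ M * R ^ β := mul_le_mul_of_nonneg_left h3 hMnonneg
    | succ n ih =>
      intro R hlo hhi hRpos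
      by_cases hcase : R₀ / 2 ^ (n + 2) < R
      · exact ih R hcase hhi hRpos
      push_neg at hcase
      have h2R1 : 2 * R ≤ R₀ / 2 := by
        have h2n : (2:ℝ) ^ (n + 2) = 2 * 2 ^ (n+1) := by ring
        have hpow : (0:ℝ) < (2:ℝ) ^ (n+1) := by positivity
        have : R ≤ R₀ / (2 * 2 ^ (n+1)) := by rw [← h2n]; exact hcase
        have hn1 : (2:ℝ) ≤ 2 ^ (n+1) := by
          calc (2:ℝ) = 2 ^ 1 := (pow_one 2).symm
            _ ≤ 2 ^ (n+1) := pow_le_pow_right₀ one_le_two (by omega)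
        calc 2 * R ≤ 2 * (R₀ / (2 * 2 ^ (n+1))) := by linarith
          _ = R₀ / 2 ^ (n+1) := by field_simp
          _ ≤ R₀ / 2 := by
            apply div_le_div_of_nonneg_left (le_of_lt hR₀) two_pos hn1
      have h2Rlo : R₀ / 2 ^ (n + 2) < 2 * R := by
        have : R₀ / 2 ^ (n + 3) < R := hlo
        have h2n : (2:ℝ) ^ (n + 3) = 2 * 2 ^ (n+2) := by ring
        rw [h2n] at this
        have hpow : (0:ℝ) < (2:ℝ) ^ (n+2) := by positivity
        rw [div_lt_iff₀ hpow]
        rw [div_lt_iff₀ (by positivity : (0:ℝ) < 2 * 2 ^ (n+2))] at this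
        linarith
      have hIH : g (2 * R) ≤ M * (2 * R) ^ β := ih (2 * R) h2Rlo h2R1 (by linarith)
      have hhole := hole R hRpos (by linarith)
      have hrw : (2 * R) ^ β = (2:ℝ) ^ β * R ^ β :=
        Real.mul_rpow (by norm_num) (le_of_lt hRpos)
      have hRγ : R ^ γ = R ^ (γ - β) * R ^ β := by
        rw [← Real.rpow_add hRpos]; ring_nf
      have hRγβ : R ^ (γ - β) ≤ R₀ ^ (γ - β) :=
        Real.rpow_le_rpow (le_of_lt hRpos) (hhi.trans (by linarith)) (by linarith)
      have hKM : K * R₀ ^ (γ - β) ≤ (1 - b) * M := by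
        have := le_max_right (g R₀ / (R₀/4) ^ β) (K * R₀ ^ (γ - β) / (1 - b))
        rw [div_le_iff₀ hb1] at this
        linarith [this]
      have hstep : g R ≤ b * M * R ^ β + K * R₀ ^ (γ - β) * R ^ β := by
        have hRβpos : (0:ℝ) ≤ R ^ β := le_of_lt (Real.rpow_pos_of_pos hRpos β)
        calc g R ≤ θ * g (2*R) + K * R ^ γ := hhole
          _ ≤ θ * (M * (2*R) ^ β) + K * R ^ γ := by
              have := mul_le_mul_of_nonneg_left hIH (le_of_lt hθ0); linarith
          _ = b * M * R ^ β + K * (R ^ (γ - β) * R ^ β) := by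
              rw [hrw, hRγ, hbdef]; ring
          _ ≤ b * M * R ^ β + K * (R₀ ^ (γ - β) * R ^ β) := by
              have := mul_le_mul_of_nonneg_right hRγβ hRβpos
              nlinarith
          _ = b * M * R ^ β + K * R₀ ^ (γ - β) * R ^ β := by ring
      have hRβpos : (0:ℝ) ≤ R ^ β := le_of_lt (Real.rpow_pos_of_pos hRpos β)
      calc g R ≤ b * M * R ^ β + K * R₀ ^ (γ - β) * R ^ β := hstep
        _ ≤ b * M * R ^ β + (1 - b) * M * R ^ β := by
            have h := mul_le_mul_of_nonneg_right hKM hRβpos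
            linarith
        _ = M * R ^ β := by ring
  intro R hRpos hRle
  obtain ⟨n, hn⟩ := pow_unbounded_of_one_lt (R₀ / R) (by norm_num : (1:ℝ) < 2)
  have hpown : (0:ℝ) < (2:ℝ) ^ n := by positivity
  have hlt : R₀ / 2 ^ n < R := by
    rw [div_lt_iff₀ hpown]
    rw [div_lt_iff₀ hRpos] at hn
    linarith [hn]
  have hle2 : R₀ / 2 ^ (n + 2) ≤ R₀ / 2 ^ n := by
    apply div_le_div_of_nonneg_left (le_of_lt hR₀) hpown
    exact pow_le_pow_right₀ one_le_two (by omega)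
  exact key n R (lt_of_le_of_lt hle2 hlt) hRle hRpos
end

section
/- Let b : [0,T] → 𝒮³_dev satisfy the ODE b'(t) = c ε'(t) − d |ε'(t)| b(t) pointwise, where ε : [0,T] → 𝒮³_dev is absolutely continuous, c, d > 0, and |b(0)| ≤ c/d. Then |b(t)| ≤ c/d for all t ∈ [0,T]. -/
open Set

/- Outside the ball of radius `c / d` the dissipative term `-d |ε'| b` dominates the forcing
`c ε'`, so the velocity points inward and `|b|²` cannot increase there; the ball is invariant. -/

theorem image_le_of_deriv_right_nonpos_of_le {f f' : ℝ → ℝ} {a b C : ℝ}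
    (hf : ContinuousOn f (Icc a b)) (hf' : ∀ x ∈ Ico a b, HasDerivWithinAt f (f' x) (Ici x) x)
    (ha : f a ≤ C) (bound : ∀ x ∈ Ico a b, C ≤ f x → f' x ≤ 0) :
    ∀ ⦃x⦄, x ∈ Icc a b → f x ≤ C := by
  intro x hx
  -- the fencing theorem needs a strict bound at contact points: fence by lines of slope `r > 0`
  have fenced : ∀ r > 0, f x ≤ C + r * (x - a) := by
    intro r hr
    refine image_le_of_deriv_right_lt_deriv_boundary hf hf' (B := fun y => C + r * (y - a))
      (B' := fun _ => r) (by simpa using ha) (fun y => ?_) (fun y hy hfy => ?_) hx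
    · simpa using ((hasDerivAt_id y).sub_const a).const_mul r |>.const_add C
    · have hCy : C ≤ f y := by rw [hfy]; nlinarith [hy.1]
      exact (bound y hy hCy).trans_lt hr
  refine le_of_forall_pos_le_add fun δ hδ => ?_
  have hxa : 0 < x - a + 1 := by linarith [hx.1]
  calc f x ≤ C + δ / (x - a + 1) * (x - a) := fenced _ (by positivity)
    _ ≤ C + δ := by
      rw [div_mul_eq_mul_div]
      gcongr C + ?_
      rw [div_le_iff₀ hxa]
      nlinarith

theorem norm_le_of_inner_deriv_nonpos_of_le_norm {E : Type*} [NormedAddCommGroup E]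
    [InnerProductSpace ℝ E] {f f' : ℝ → E} {a b R : ℝ}
    (hf : ∀ t ∈ Icc a b, HasDerivAt f (f' t) t)
    (inward : ∀ t ∈ Ico a b, R ≤ ‖f t‖ → inner ℝ (f t) (f' t) ≤ 0) (ha : ‖f a‖ ≤ R) :
    ∀ ⦃t⦄, t ∈ Icc a b → ‖f t‖ ≤ R := by
  have hR : 0 ≤ R := (norm_nonneg _).trans ha
  have hsq : ∀ t, R ^ 2 ≤ ‖f t‖ ^ 2 ↔ R ≤ ‖f t‖ := fun t =>
    pow_le_pow_iff_left₀ hR (norm_nonneg _) two_ne_zero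
  have hf_sq : ∀ t ∈ Icc a b, HasDerivAt (‖f ·‖ ^ 2) (2 * inner ℝ (f t) (f' t)) t :=
    fun t ht => (hf t ht).norm_sq
  intro t ht
  have := image_le_of_deriv_right_nonpos_of_le (C := R ^ 2)
    (fun t ht => (hf_sq t ht).continuousAt.continuousWithinAt)
    (fun t ht => (hf_sq t (Ico_subset_Icc_self ht)).hasDerivWithinAt)
    (pow_le_pow_left₀ (norm_nonneg _) ha 2)
    (fun t ht hRt => by linarith [inward t ht ((hsq t).1 hRt)]) ht
  exact le_of_pow_le_pow_left₀ two_ne_zero hR this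

theorem inner_self_smul_sub_norm_smul_self_nonpos {E : Type*} [NormedAddCommGroup E]
    [InnerProductSpace ℝ E] {c d : ℝ} {e v : E} (hc : 0 ≤ c) (hv : c ≤ d * ‖v‖) :
    inner ℝ v (c • e - (d * ‖e‖) • v) ≤ 0 := by
  have hcs : c * inner ℝ v e ≤ c * (‖v‖ * ‖e‖) :=
    mul_le_mul_of_nonneg_left (real_inner_le_norm v e) hc
  calc inner ℝ v (c • e - (d * ‖e‖) • v)
      = c * inner ℝ v e - d * ‖e‖ * ‖v‖ ^ 2 := by
        rw [inner_sub_right, real_inner_smul_right, real_inner_smul_right,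
          real_inner_self_eq_norm_sq]
    _ ≤ ‖v‖ * ‖e‖ * (c - d * ‖v‖) := by linarith
    _ ≤ 0 := mul_nonpos_of_nonneg_of_nonpos (by positivity) (by linarith)

theorem backstress_bound_general {E : Type*} [NormedAddCommGroup E] [InnerProductSpace ℝ E]
    (T c d : ℝ) (hc : 0 < c) (hd : 0 < d)
    (b ε' : ℝ → E)
    (hb : ∀ t ∈ Icc 0 T, HasDerivAt b (c • ε' t - (d * ‖ε' t‖) • b t) t)
    (h0 : ‖b 0‖ ≤ c / d) :
    ∀ t ∈ Icc 0 T, ‖b t‖ ≤ c / d := fun _ ht =>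
  norm_le_of_inner_deriv_nonpos_of_le_norm hb
    (fun _ _ hbt => inner_self_smul_sub_norm_smul_self_nonpos hc.le ((div_le_iff₀' hd).1 hbt))
    h0 ht

/-- `L∞`-boundedness of the backstress (pointwise content of Lemma 4.2): the
Armstrong–Frederick evolution `b' = c ε' − d |ε'| b` preserves the ball of radius `c/d`. -/
theorem backstress_bound {E : Type*} [NormedAddCommGroup E] [InnerProductSpace ℝ E]
    (T c d : ℝ) (hT : 0 ≤ T) (hc : 0 < c) (hd : 0 < d)
    (b ε ε' : ℝ → E)
    (hε : ∀ t ∈ Icc 0 T, HasDerivAt ε (ε' t) t)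
    (hb : ∀ t ∈ Icc 0 T, HasDerivAt b (c • ε' t - (d * ‖ε' t‖) • b t) t)
    (h0 : ‖b 0‖ ≤ c / d) :
    ∀ t ∈ Icc 0 T, ‖b t‖ ≤ c / d :=
  backstress_bound_general T c d hc hd b ε' hb h0
end
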